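/- Let e = 2, a = 2r+1, b = 2, λ = (a,1^2), and let f ∈ End_H(S_λ) be given by f(z) = Σ_{c=1}^{r} c · Ψ↓(3+2(r−c), 3) z. Then f² = −(r+1) f, i.e., f²(z) = −(r+1) f(z). -/
import Mathlib


open scoped BigOperators

def swapSeq (r : ℕ) (i : ℕ → ZMod 2) : ℕ → ZMod 2 :=
  fun k => if k = r then i (r + 1) else if k = r + 1 then i r else i k

/-- The KLR (quiver Hecke) algebra relations of type `A₁⁽¹⁾` (quantum characteristic `e = 2`)
on `n` strands, with generators `y 1, …, y n`, `ψ 1, …, ψ (n-1)` and idempotents `e i`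
indexed by residue sequences `i : ℕ → ZMod 2` (positions `1, …, n` are the relevant ones). -/
structure KLR (A : Type*) [Ring A] (n : ℕ) where
  y : ℕ → A
  ψ : ℕ → A
  e : (ℕ → ZMod 2) → A
  e_idem : ∀ i, e i * e i = e i
  e_orth : ∀ i j, i ≠ j → e i * e j = 0
  y_e : ∀ r i, 1 ≤ r → r ≤ n → y r * e i = e i * y r
  psi_e : ∀ r i, 1 ≤ r → r + 1 ≤ n → ψ r * e i = e (swapSeq r i) * ψ r
  y_comm : ∀ r s, 1 ≤ r → r ≤ n → 1 ≤ s → s ≤ n → y r * y s = y s * y r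
  y_psi_comm : ∀ r s, 1 ≤ r → r + 1 ≤ n → 1 ≤ s → s ≤ n → s ≠ r → s ≠ r + 1 →
    y s * ψ r = ψ r * y s
  y_psi_same : ∀ r i, 1 ≤ r → r + 1 ≤ n → i r = i (r + 1) →
    y r * ψ r * e i = (ψ r * y (r + 1) - 1) * e i
  y_psi_diff : ∀ r i, 1 ≤ r → r + 1 ≤ n → i r ≠ i (r + 1) →
    y r * ψ r * e i = ψ r * y (r + 1) * e i
  y_psi_same' : ∀ r i, 1 ≤ r → r + 1 ≤ n → i r = i (r + 1) →
    y (r + 1) * ψ r * e i = (ψ r * y r + 1) * e i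
  y_psi_diff' : ∀ r i, 1 ≤ r → r + 1 ≤ n → i r ≠ i (r + 1) →
    y (r + 1) * ψ r * e i = ψ r * y r * e i
  psi_comm : ∀ r s, 1 ≤ r → r + 1 ≤ n → 1 ≤ s → s + 1 ≤ n → r + 1 < s →
    ψ s * ψ r = ψ r * ψ s
  psi_sq_same : ∀ r i, 1 ≤ r → r + 1 ≤ n → i r = i (r + 1) → ψ r * ψ r * e i = 0
  psi_sq_diff : ∀ r i, 1 ≤ r → r + 1 ≤ n → i r ≠ i (r + 1) →
    ψ r * ψ r * e i = -((y r - y (r + 1)) ^ 2) * e i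
  braid_same : ∀ r i, 1 ≤ r → r + 2 ≤ n → (i r = i (r + 1) ∨ i (r + 1) = i (r + 2)) →
    ψ r * ψ (r + 1) * ψ r * e i = ψ (r + 1) * ψ r * ψ (r + 1) * e i
  braid_diff : ∀ r i, 1 ≤ r → r + 2 ≤ n → i r ≠ i (r + 1) → i (r + 1) ≠ i (r + 2) →
    ψ r * ψ (r + 1) * ψ r * e i =
      (ψ (r + 1) * ψ r * ψ (r + 1) + y r - 2 * y (r + 1) + y (r + 2)) * e i

variable {A : Type*} [Ring A] {n : ℕ}

/-- `Ψ j = ψ j * ψ (j+1) * ψ (j-1) * ψ j`. -/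
def PsiBig (K : KLR A n) (j : ℕ) : A := K.ψ j * K.ψ (j + 1) * K.ψ (j - 1) * K.ψ j

/-- `Ψ↓(x,y) = Ψ x * Ψ (x-2) * ⋯ * Ψ y` (the empty product `1` if `x < y`). -/
def chainD (K : KLR A n) (x y : ℕ) : A :=
  ((List.range ((x + 2 - y) / 2)).map fun k => PsiBig K (x - 2 * k)).prod

/-- `Ψ↑(x,y) = Ψ x * Ψ (x+2) * ⋯ * Ψ y` (the empty product `1` if `y < x`). -/
def chainU (K : KLR A n) (x y : ℕ) : A :=
  ((List.range ((y + 2 - x) / 2)).map fun k => PsiBig K (x + 2 * k)).prod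

/-- `ψ_w` along a word `l` of indices. -/
def psiWord (K : KLR A n) (l : List ℕ) : A := (l.map K.ψ).prod

/-- `ψ x * ψ (x+1) * ⋯ * ψ y`. -/
def ascWord (K : KLR A n) (x y : ℕ) : A :=
  psiWord K ((List.range (y + 1 - x)).map fun t => x + t)

/-- The residue sequence `i_λ` of the initial tableau of the hook `(a, 1^b)` at `e = 2`. -/
def iLamGen (b : ℕ) : ℕ → ZMod 2 :=
  fun k => if k ≤ b + 1 then (k : ZMod 2) + 1 else (k : ZMod 2) + (b : ZMod 2) + 1

/-- `normProd K base [j₁, …, j_d] = Ψ↓(j₁, base) * Ψ↓(j₂, base+2) * ⋯ * Ψ↓(j_d, base+2(d-1))`. -/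
def normProd (K : KLR A n) : ℕ → List ℕ → A
  | _, [] => 1
  | base, j :: rest => chainD K j base * normProd K (base + 2) rest

/-- Valid normal-form data `[j₁ < j₂ < ⋯ < j_d]` for a domino tableau of the hook `(a,1^b)`,
`n = a + b`: all `jᵢ` odd, `b + 3 - 2d + 2i ≤ jᵢ₊₁ ≤ n - 2` (written without truncated
subtraction). -/
def NormOK (n b : ℕ) (p : List ℕ) : Prop :=
  2 * p.length ≤ b ∧ List.Chain' (· < ·) p ∧
    ∀ i, (h : i < p.length) → Odd (p.get ⟨i, h⟩) ∧
      b + 3 + 2 * i ≤ p.get ⟨i, h⟩ + 2 * p.length ∧ p.get ⟨i, h⟩ + 2 ≤ n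

/-- The number `r(T)` of `Ψ` factors in the normal form. -/
def rOf (b : ℕ) (p : List ℕ) : ℕ :=
  ∑ i ∈ Finset.range p.length, (p.getD i 0 + 2 * p.length - (b + 1 + 2 * i)) / 2

/-- `[x, x-1, …, y]` (empty if `x < y`). -/
def descList (x y : ℕ) : List ℕ := (List.range (x + 1 - y)).map fun t => x - t

/-- The canonical reduced word of the permutation `w_T` for the standard hook tableau with
leg-entry set `L = {l₁ < ⋯ < l_b}`: the concatenation of the descending runs
`[l_k - 1, l_k - 2, …, k + 1]` for `k = 1, …, b`. -/
def tabWord (L : Finset ℕ) : List ℕ :=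
  (List.range L.card).flatMap fun k => descList ((L.sort (· ≤ ·)).getD k 0 - 1) (k + 2)

/-- Coxeter length as number of inversions in `{1, …, n}`. -/
def invLen (n : ℕ) (w : Equiv.Perm ℕ) : ℕ :=
  (((Finset.Icc 1 n) ×ˢ (Finset.Icc 1 n)).filter fun p => p.1 < p.2 ∧ w p.2 < w p.1).card


section Helpers
variable {M : Type*} [AddCommGroup M] [Module A M]

lemma apply_rel (K : KLR A n) {X Y : A} {j : ℕ → ZMod 2} {v : M}
    (hv : K.e j • v = v) (h : X * K.e j = Y * K.e j) : X • v = Y • v := by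
  have h1 : X • v = (X * K.e j) • v := by rw [mul_smul, hv]
  have h2 : Y • v = (Y * K.e j) • v := by rw [mul_smul, hv]
  rw [h1, h2, h]

lemma comm_smul {X Y : A} (h : X * Y = Y * X) (v : M) : X • Y • v = Y • X • v := by
  rw [← mul_smul, h, mul_smul]

lemma e_prop (K : KLR A n) (r : ℕ) {j : ℕ → ZMod 2} {v : M}
    (h1 : 1 ≤ r) (h2 : r + 1 ≤ n) (hv : K.e j • v = v) :
    K.e (swapSeq r j) • (K.ψ r • v) = K.ψ r • v := by
  have key : K.ψ r • v = (K.e (swapSeq r j) * K.ψ r) • v := by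
    conv_lhs => rw [← hv, ← mul_smul, K.psi_e r j h1 h2]
  rw [key, ← mul_smul, ← mul_assoc, K.e_idem]

lemma swapSeq_fix (r : ℕ) (i : ℕ → ZMod 2) (h : i r = i (r+1)) : swapSeq r i = i := by
  funext k; simp only [swapSeq]; split_ifs with h1 h2
  · rw [h1, ← h]
  · rw [h2, h]
  · rfl

lemma swapSeq_invol (r : ℕ) (i : ℕ → ZMod 2) : swapSeq r (swapSeq r i) = i := by
  funext k; simp only [swapSeq]; split_ifs with h1 h2 <;> simp_all [swapSeq]

lemma PsiBig3_eq (K : KLR A n) : PsiBig K 3 = K.ψ 3 * K.ψ 4 * K.ψ 2 * K.ψ 3 := rfl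
lemma PsiBig5_eq (K : KLR A n) : PsiBig K 5 = K.ψ 5 * K.ψ 6 * K.ψ 4 * K.ψ 5 := rfl
lemma PsiBig7_eq (K : KLR A n) : PsiBig K 7 = K.ψ 7 * K.ψ 8 * K.ψ 6 * K.ψ 7 := rfl

lemma chainD_three (K : KLR A n) : chainD K 3 3 = PsiBig K 3 := by
  unfold chainD
  rw [show (3+2-3)/2 = 1 from rfl, List.range_succ]; simp

lemma chainD_split (K : KLR A n) (m : ℕ) :
    chainD K (3 + 2*m) 3 = chainD K (3 + 2*m) 5 * PsiBig K 3 := by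
  unfold chainD
  have h1 : (3 + 2*m + 2 - 3)/2 = m + 1 := by omega
  have h2 : (3 + 2*m + 2 - 5)/2 = m := by omega
  rw [h1, h2, List.range_succ, List.map_append, List.prod_append]
  have h3 : 3 + 2*m - 2*m = 3 := by omega
  simp [h3]

lemma chainD_head (K : KLR A n) (m : ℕ) :
    chainD K (5 + 2*m) 3 = PsiBig K (5 + 2*m) * chainD K (3 + 2*m) 3 := by
  unfold chainD
  have h1 : (5 + 2*m + 2 - 3)/2 = m + 2 := by omega
  have h2 : (3 + 2*m + 2 - 3)/2 = m + 1 := by omega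
  rw [h1, h2, List.range_succ_eq_map, List.map_cons, List.prod_cons, List.map_map]
  have h3 : ((fun k => PsiBig K (5+2*m-2*k)) ∘ Nat.succ) = (fun k => PsiBig K (3+2*m-2*k)) := by
    funext k; simp only [Function.comp_apply]; congr 1; omega
  rw [h3]
  norm_num

lemma psi_comm_big (K : KLR A n) (s : ℕ) (h6 : 6 ≤ s) (hs : s + 1 ≤ n) (hn5 : 5 ≤ n) :
    K.ψ s * PsiBig K 3 = PsiBig K 3 * K.ψ s := by
  have c2 := K.psi_comm 2 s (by omega) (by omega) (by omega) hs (by omega)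
  have c3 := K.psi_comm 3 s (by omega) (by omega) (by omega) hs (by omega)
  have c4 := K.psi_comm 4 s (by omega) (by omega) (by omega) hs (by omega)
  rw [PsiBig3_eq, ← mul_assoc, ← mul_assoc, ← mul_assoc, c3, mul_assoc (K.ψ 3), c4,
    ← mul_assoc, mul_assoc _ (K.ψ s), c2, ← mul_assoc, mul_assoc _ (K.ψ s), c3, ← mul_assoc]

lemma PsiBig_comm3 (K : KLR A n) (m : ℕ) (h7 : 7 ≤ m) (hm : m + 2 ≤ n) :
    PsiBig K 3 * PsiBig K m = PsiBig K m * PsiBig K 3 := by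
  have hn5 : 5 ≤ n := by omega
  have cm := psi_comm_big K m (by omega) (by omega) hn5
  have cm1 := psi_comm_big K (m+1) (by omega) (by omega) hn5
  have cm' := psi_comm_big K (m-1) (by omega) (by omega) hn5
  show PsiBig K 3 * (K.ψ m * K.ψ (m+1) * K.ψ (m-1) * K.ψ m)
      = (K.ψ m * K.ψ (m+1) * K.ψ (m-1) * K.ψ m) * PsiBig K 3
  rw [← mul_assoc, ← mul_assoc, ← mul_assoc, ← cm, mul_assoc (K.ψ m), ← cm1,
    ← mul_assoc, mul_assoc _ _ (K.ψ (m-1)), ← cm', ← mul_assoc, mul_assoc _ _ (K.ψ m), ← cm,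
    ← mul_assoc]

end Helpers

def iAlt : ℕ → ZMod 2 := fun k => (k : ZMod 2) + 1
def jj : ℕ → ZMod 2 := swapSeq 3 iAlt

lemma iLam2_eq : iLamGen 2 = iAlt := by
  funext k
  unfold iLamGen iAlt
  split_ifs
  · rfl
  · show (k : ZMod 2) + ((2:ℕ) : ZMod 2) + 1 = (k : ZMod 2) + 1
    have : ((2:ℕ) : ZMod 2) = 0 := by decide
    rw [this, add_zero]

/-- Lemma `f2`: `e = 2`, `a = 2r + 1`, `b = 2`, `λ = (a, 1²)`, and
`f ∈ End(S_λ)` given by `f(z) = Σ_{c=1}^{r} c · Ψ↓(3 + 2(r-c), 3) z`.  Then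
`f² = -(r + 1) f`. -/
theorem specht_hook_leg_two_f_squared {F M : Type*} [Field F] [Algebra F A]
    [AddCommGroup M] [Module A M] [Module F M] [IsScalarTower F A M]
    (r a : ℕ) (ha : a = 2 * r + 1) (hn : n = a + 2)
    (K : KLR A n) (z : M)
    (hy : ∀ k, 1 ≤ k → k ≤ n → K.y k • z = 0)
    (he1 : K.e (iLamGen 2) • z = z)
    (he2 : ∀ i, i ≠ iLamGen 2 → K.e i • z = 0)
    (hpsiz : ∀ j, 1 ≤ j → j + 1 ≤ n → j ≠ 3 → K.ψ j • z = 0)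
    (hgar : ascWord K 1 3 • z = 0)
    (hgen : Submodule.span A {z} = ⊤)
    (f : M →ₗ[A] M)
    (hf : f z = ∑ c ∈ Finset.Icc 1 r, ((c : ℕ) : F) • (chainD K (3 + 2 * (r - c)) 3 • z)) :
    ∀ m : M, f (f m) = -(((r + 1 : ℕ) : F)) • f m := by
  have hn' : n = 2*r + 3 := by omega
  have hAS : ∀ (q : F) (x : A) (v : M), x • (q • v) = q • (x • v) := by
    intro q x v
    rw [← algebraMap_smul A q v, ← mul_smul, ← Algebra.commutes, mul_smul, algebraMap_smul]
  have hfF : ∀ (q : F) (v : M), f (q • v) = q • f v := by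
    intro q v; rw [← algebraMap_smul A q v, map_smul, algebraMap_smul]
  suffices hz : f (f z) = -(((r + 1 : ℕ) : F)) • f z by
    intro m
    obtain ⟨x, rfl⟩ : ∃ x : A, x • z = m := by
      have hm : m ∈ Submodule.span A {z} := by rw [hgen]; trivial
      simpa [Submodule.mem_span_singleton] using hm
    rw [map_smul, map_smul, hz, hAS, ← map_smul]
  rcases Nat.eq_zero_or_pos r with hr0 | hr1
  · subst hr0
    rw [Finset.Icc_eq_empty (by omega), Finset.sum_empty] at hf
    rw [hf, map_zero, smul_zero]

  -- r ≥ 1 : main case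
  have hn5 : 5 ≤ n := by omega
  rw [iLam2_eq] at he1
  set w1 := K.ψ 3 • z with hw1
  set w2 := K.ψ 2 • w1 with hw2
  set w3 := K.ψ 4 • w2 with hw3
  set w4 := K.ψ 3 • w3 with hw4
  have hPB3z : PsiBig K 3 • z = w4 := by
    rw [PsiBig3_eq, mul_smul, mul_smul, mul_smul, ← hw1, ← hw2, ← hw3, ← hw4]
  have hej1 : K.e jj • w1 = w1 := by
    rw [hw1]; exact e_prop K 3 (by omega) (by omega) he1
  have hej2 : K.e jj • w2 = w2 := by
    have h := e_prop K 2 (by omega) (by omega) hej1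
    rwa [swapSeq_fix 2 jj (by decide), ← hw2] at h
  have hej3 : K.e jj • w3 = w3 := by
    have h := e_prop K 4 (by omega) (by omega) hej2
    rwa [swapSeq_fix 4 jj (by decide), ← hw3] at h
  -- y values
  have hy2w1 : K.y 2 • w1 = 0 := by
    rw [hw1, ← mul_smul, K.y_psi_comm 3 2 (by omega) (by omega) (by omega) (by omega)
      (by omega) (by omega), mul_smul, hy 2 (by omega) (by omega), smul_zero]
  have hy3w1 : K.y 3 • w1 = 0 := by
    have h := apply_rel K he1 (K.y_psi_diff 3 iAlt (by omega) (by omega) (by decide))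
    rw [hw1, ← mul_smul, h, mul_smul, hy (3+1) (by omega) (by omega), smul_zero]
  have hy4w1 : K.y 4 • w1 = 0 := by
    have h := apply_rel K he1 (K.y_psi_diff' 3 iAlt (by omega) (by omega) (by decide))
    rw [hw1]
    show K.y (3+1) • (K.ψ 3 • z) = 0
    rw [← mul_smul, h, mul_smul, hy 3 (by omega) (by omega), smul_zero]
  have hy5w1 : K.y 5 • w1 = 0 := by
    rw [hw1, ← mul_smul, K.y_psi_comm 3 5 (by omega) (by omega) (by omega) (by omega)
      (by omega) (by omega), mul_smul, hy 5 (by omega) (by omega), smul_zero]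
  have hy3w2 : K.y 3 • w2 = w1 := by
    have h := apply_rel K hej1 (K.y_psi_same' 2 jj (by omega) (by omega) (by decide))
    rw [hw2]
    show K.y (2+1) • (K.ψ 2 • w1) = w1
    rw [← mul_smul, h, add_smul, one_smul, mul_smul, hy2w1, smul_zero, zero_add]
  have hy4w2 : K.y 4 • w2 = 0 := by
    rw [hw2, ← mul_smul, K.y_psi_comm 2 4 (by omega) (by omega) (by omega) (by omega)
      (by omega) (by omega), mul_smul, hy4w1, smul_zero]
  have hy5w2 : K.y 5 • w2 = 0 := by
    rw [hw2, ← mul_smul, K.y_psi_comm 2 5 (by omega) (by omega) (by omega) (by omega)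
      (by omega) (by omega), mul_smul, hy5w1, smul_zero]
  have hy3w3 : K.y 3 • w3 = K.ψ 4 • w1 := by
    rw [hw3, ← mul_smul, K.y_psi_comm 4 3 (by omega) (by omega) (by omega) (by omega)
      (by omega) (by omega), mul_smul, hy3w2]
  have hy4w3 : K.y 4 • w3 = -w2 := by
    have h := apply_rel K hej2 (K.y_psi_same 4 jj (by omega) (by omega) (by decide))
    rw [hw3, ← mul_smul, h, sub_smul, one_smul, mul_smul, hy5w2, smul_zero, zero_sub]
  have hy4p41 : K.y 4 • (K.ψ 4 • w1) = -w1 := by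
    have h := apply_rel K hej1 (K.y_psi_same 4 jj (by omega) (by omega) (by decide))
    rw [← mul_smul, h, sub_smul, one_smul, mul_smul, hy5w1, smul_zero, zero_sub]
  -- C1 : PsiBig 3 • w4 = -(w4 + w4)
  have hD : (K.y 3 - K.y 4) • w3 = K.ψ 4 • w1 + w2 := by
    rw [sub_smul, hy3w3, hy4w3, sub_neg_eq_add]
  have hD2 : (K.y 3 - K.y 4) • (K.ψ 4 • w1 + w2) = w1 + w1 := by
    rw [sub_smul, smul_add, smul_add]
    rw [comm_smul (K.y_psi_comm 4 3 (by omega) (by omega) (by omega) (by omega)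
      (by omega) (by omega)) w1, hy3w1, smul_zero, hy3w2, hy4p41, hy4w2]
    abel
  have hpsi33w3 : K.ψ 3 • w4 = -(w1 + w1) := by
    have h := apply_rel K hej3 (K.psi_sq_diff 3 jj (by omega) (by omega) (by decide))
    rw [hw4, ← mul_smul, h, neg_smul, pow_two, mul_smul, hD, hD2]
  have hC1 : PsiBig K 3 • w4 = -(w4 + w4) := by
    rw [PsiBig3_eq, mul_smul, mul_smul, mul_smul, hpsi33w3, smul_neg, smul_add,
      ← hw2, smul_neg, smul_add, ← hw3, smul_neg, smul_add, ← hw4]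

  have hkey : PsiBig K 3 • f z = -(((r + 1 : ℕ) : F)) • w4 := by
    obtain ⟨s, rfl⟩ : ∃ s, r = s + 1 := ⟨r - 1, by omega⟩
    rcases Nat.eq_zero_or_pos s with rfl | hs1
    · -- r = 1
      rw [hf, Finset.smul_sum, Finset.sum_Icc_succ_top (by omega : (1:ℕ) ≤ 0 + 1),
        Finset.Icc_eq_empty (by omega), Finset.sum_empty, zero_add]
      rw [hAS]
      have h3 : 3 + 2 * (0 + 1 - (0 + 1)) = 3 := by omega
      rw [h3, chainD_three, hPB3z, hC1]
      have h2v : -(w4 + w4) = ((-2 : F)) • w4 := by rw [neg_smul, two_smul]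
      rw [h2v, smul_smul]
      congr 1
      push_cast
      ring
    · -- r ≥ 2
      obtain ⟨t, rfl⟩ : ∃ t, s = t + 1 := ⟨s - 1, by omega⟩
      have hn7 : 7 ≤ n := by omega
      have hy6z := hy 6 (by omega) (by omega)
      have hy7z := hy 7 (by omega) (by omega)
      have hpsi5z : K.ψ 5 • z = 0 := hpsiz 5 (by omega) (by omega) (by omega)
      have hpsi6z : K.ψ 6 • z = 0 := hpsiz 6 (by omega) (by omega) (by omega)
      have hy6w1 : K.y 6 • w1 = 0 := by
        rw [hw1, ← mul_smul, K.y_psi_comm 3 6 (by omega) (by omega) (by omega) (by omega)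
          (by omega) (by omega), mul_smul, hy6z, smul_zero]
      have hy7w1 : K.y 7 • w1 = 0 := by
        rw [hw1, ← mul_smul, K.y_psi_comm 3 7 (by omega) (by omega) (by omega) (by omega)
          (by omega) (by omega), mul_smul, hy7z, smul_zero]
      have hy6w2 : K.y 6 • w2 = 0 := by
        rw [hw2, ← mul_smul, K.y_psi_comm 2 6 (by omega) (by omega) (by omega) (by omega)
          (by omega) (by omega), mul_smul, hy6w1, smul_zero]
      have hy6w3 : K.y 6 • w3 = 0 := by
        rw [hw3, ← mul_smul, K.y_psi_comm 4 6 (by omega) (by omega) (by omega) (by omega)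
          (by omega) (by omega), mul_smul, hy6w2, smul_zero]
      have hpsi5w2 : K.ψ 5 • w2 = 0 := by
        rw [hw2, hw1, comm_smul (K.psi_comm 2 5 (by omega) (by omega) (by omega) (by omega)
          (by omega)), comm_smul (K.psi_comm 3 5 (by omega) (by omega) (by omega) (by omega)
          (by omega)), hpsi5z, smul_zero, smul_zero]
      have hpsi6w1 : K.ψ 6 • w1 = 0 := by
        rw [hw1, comm_smul (K.psi_comm 3 6 (by omega) (by omega) (by omega) (by omega)
          (by omega)), hpsi6z, smul_zero]
      have heqp : K.e (swapSeq 5 jj) • (K.ψ 5 • w3) = K.ψ 5 • w3 :=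
        e_prop K 5 (by omega) (by omega) hej3
      have hy3p : K.y 3 • (K.ψ 5 • w3) = K.ψ 5 • (K.ψ 4 • w1) := by
        rw [comm_smul (K.y_psi_comm 5 3 (by omega) (by omega) (by omega) (by omega)
          (by omega) (by omega)), hy3w3]
      have hy4p : K.y 4 • (K.ψ 5 • w3) = 0 := by
        rw [comm_smul (K.y_psi_comm 5 4 (by omega) (by omega) (by omega) (by omega)
          (by omega) (by omega)), hy4w3, smul_neg, hpsi5w2, neg_zero]
      have hy5p : K.y 5 • (K.ψ 5 • w3) = 0 := by
        have h := apply_rel K hej3 (K.y_psi_diff 5 jj (by omega) (by omega) (by decide))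
        rw [← mul_smul, h, mul_smul, hy6w3, smul_zero]
      have hpsi4p : K.ψ 4 • (K.ψ 5 • w3) = 0 := by
        have h := apply_rel K hej2 (K.braid_same 4 jj (by omega) (by omega) (Or.inl (by decide)))
        rw [hw3, ← mul_smul, ← mul_smul, h, mul_smul, mul_smul, hpsi5w2, smul_zero, smul_zero]
      have hbr3 : (K.ψ 3 * K.ψ 4 * K.ψ 3) • (K.ψ 5 • w3) = K.ψ 5 • (K.ψ 4 • w1) := by
        have h := apply_rel K heqp
          (K.braid_diff 3 (swapSeq 5 jj) (by omega) (by omega) (by decide) (by decide))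
        rw [h, add_smul, sub_smul, add_smul, mul_smul, mul_smul, mul_smul]
        simp only [show (3:ℕ)+1 = 4 from rfl, show (3:ℕ)+2 = 5 from rfl]
        rw [hpsi4p, smul_zero, smul_zero, hy3p, hy4p, smul_zero, hy5p]
        abel
      have hej41 : K.e jj • (K.ψ 4 • w1) = K.ψ 4 • w1 := by
        have h := e_prop K 4 (by omega) (by omega) hej1
        rwa [swapSeq_fix 4 jj (by decide)] at h
      have hbr5 : (K.ψ 5 * K.ψ 6 * K.ψ 5) • (K.ψ 4 • w1) = w1 := by
        have h := apply_rel K hej41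
          (K.braid_diff 5 jj (by omega) (by omega) (by decide) (by decide))
        rw [h, add_smul, sub_smul, add_smul, mul_smul, mul_smul, mul_smul]
        simp only [show (5:ℕ)+1 = 6 from rfl, show (5:ℕ)+2 = 7 from rfl]
        rw [comm_smul (K.psi_comm 4 6 (by omega) (by omega) (by omega) (by omega)
          (by omega)) w1, hpsi6w1, smul_zero, smul_zero, smul_zero]
        have hy5p41 : K.y 5 • (K.ψ 4 • w1) = w1 := by
          have h2 := apply_rel K hej1 (K.y_psi_same' 4 jj (by omega) (by omega) (by decide))
          show K.y (4+1) • (K.ψ 4 • w1) = w1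
          rw [← mul_smul, h2, add_smul, one_smul, mul_smul, hy4w1, smul_zero, zero_add]
        have hy6p41 : K.y 6 • (K.ψ 4 • w1) = 0 := by
          rw [comm_smul (K.y_psi_comm 4 6 (by omega) (by omega) (by omega) (by omega)
            (by omega) (by omega)), hy6w1, smul_zero]
        have hy7p41 : K.y 7 • (K.ψ 4 • w1) = 0 := by
          rw [comm_smul (K.y_psi_comm 4 7 (by omega) (by omega) (by omega) (by omega)
            (by omega) (by omega)), hy7w1, smul_zero]
        rw [hy5p41, hy6p41, smul_zero, hy7p41]
        abel
      have hC2 : PsiBig K 3 • (PsiBig K 5 • w4) = w4 := by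
        have h54 : K.ψ 5 • w4 = K.ψ 3 • (K.ψ 5 • w3) := by
          rw [hw4, comm_smul (K.psi_comm 3 5 (by omega) (by omega) (by omega) (by omega)
            (by omega))]
        have hbr3' : K.ψ 3 • (K.ψ 4 • (K.ψ 3 • (K.ψ 5 • w3))) = K.ψ 5 • (K.ψ 4 • w1) := by
          rw [← mul_smul, ← mul_smul]; exact hbr3
        have hbr5' : K.ψ 5 • (K.ψ 6 • (K.ψ 5 • (K.ψ 4 • w1))) = w1 := by
          rw [← mul_smul, ← mul_smul]; exact hbr5
        have step1 : K.ψ 3 • (K.ψ 5 • (K.ψ 6 • (K.ψ 4 • (K.ψ 3 • (K.ψ 5 • w3))))) = w1 := by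
          rw [← comm_smul (K.psi_comm 3 5 (by omega) (by omega) (by omega) (by omega)
            (by omega)) _, ← comm_smul (K.psi_comm 3 6 (by omega) (by omega) (by omega)
            (by omega) (by omega)) _]
          rw [hbr3', hbr5']
        rw [PsiBig5_eq, mul_smul, mul_smul, mul_smul, h54, PsiBig3_eq,
          mul_smul, mul_smul, mul_smul, step1, ← hw2, ← hw3, ← hw4]
      have hF2 : ∀ k, 2 ≤ k → k + 1 ≤ t + 1 + 1 → PsiBig K 3 • (chainD K (3 + 2*k) 3 • z) = 0 := by
        intro k hk2
        induction k, hk2 using Nat.le_induction with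
        | base =>
          intro hkr
          have h7 : (3 + 2*2 : ℕ) = 5 + 2*1 := by norm_num
          have h5 : (3 + 2*1 : ℕ) = 5 + 2*0 := by norm_num
          rw [h7, chainD_head, ← h5, h5, chainD_head]
          have h30 : (3 + 2*0 : ℕ) = 3 := by norm_num
          have h51 : (5 + 2*1 : ℕ) = 7 := by norm_num
          have h50 : (5 + 2*0 : ℕ) = 5 := by norm_num
          rw [h30, h50, h51, chainD_three, mul_smul, mul_smul,
            comm_smul (PsiBig_comm3 K 7 (by omega) (by omega)), hPB3z, hC2, ← hPB3z,
            ← comm_smul (PsiBig_comm3 K 7 (by omega) (by omega))]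
          rw [PsiBig7_eq, mul_smul, mul_smul, mul_smul,
            hpsiz 7 (by omega) (by omega) (by omega)]
          simp
        | succ k hk ih =>
          intro hkr
          have hs : (3 + 2*(k+1) : ℕ) = 5 + 2*k := by omega
          rw [hs, chainD_head, mul_smul,
            comm_smul (PsiBig_comm3 K (5 + 2*k) (by omega) (by omega)), ih (by omega),
            smul_zero]
      -- assemble the sum
      rw [hf, Finset.smul_sum,
        Finset.sum_Icc_succ_top (by omega : (1:ℕ) ≤ t + 1 + 1),
        Finset.sum_Icc_succ_top (by omega : (1:ℕ) ≤ t + 1)]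
      have hzero : ∑ c ∈ Finset.Icc 1 t,
          PsiBig K 3 • (((c : ℕ) : F) • (chainD K (3 + 2 * (t + 1 + 1 - c)) 3 • z)) = 0 := by
        refine Finset.sum_eq_zero fun c hc => ?_
        rw [Finset.mem_Icc] at hc
        rw [hAS]
        have hk : 3 + 2 * (t + 1 + 1 - c) = 3 + 2 * (t + 2 - c) := by omega
        rw [hk, hF2 (t + 2 - c) (by omega) (by omega), smul_zero]
      rw [hzero, zero_add]
      have e5 : 3 + 2 * (t + 1 + 1 - (t + 1)) = 5 + 2*0 := by omega
      have e3 : 3 + 2 * (t + 1 + 1 - (t + 1 + 1)) = 3 := by omega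
      rw [hAS, hAS, e5, e3, chainD_head, chainD_three]
      have h50 : (5 + 2*0 : ℕ) = 5 := by norm_num
      rw [h50, mul_smul, hPB3z, hC2, hC1]
      have h2v : -(w4 + w4) = ((-2 : F)) • w4 := by rw [neg_smul, two_smul]
      rw [h2v, smul_smul, ← add_smul]
      congr 1
      push_cast
      ring
  -- final assembly
  calc f (f z) = ∑ c ∈ Finset.Icc 1 r, f (((c : ℕ) : F) • (chainD K (3 + 2 * (r - c)) 3 • z)) := by
        rw [hf, map_sum]
    _ = ∑ c ∈ Finset.Icc 1 r, -(((r + 1 : ℕ) : F)) • (((c : ℕ) : F) • (chainD K (3 + 2 * (r - c)) 3 • z)) := by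
        refine Finset.sum_congr rfl fun c hc => ?_
        rw [hfF, map_smul, chainD_split K (r - c), mul_smul, mul_smul, hkey, hAS, hPB3z,
          smul_smul, smul_smul, mul_comm, mul_smul]
    _ = -(((r + 1 : ℕ) : F)) • f z := by rw [← Finset.smul_sum, hf]
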